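/- In Minkowski space ℝ^{n+2}_1 with o, ι, t_u, t_v as above, for λ ∈ ℝ with 2λ−1 > 0, the endomorphism ξ^Im = (t_u − λo − ι)∧t_v satisfies ξ^Im(W_±) = ±√(2λ−1)·W_±, where W_± = λo + ι − t_u ± √(2λ−1)·t_v. -/
import Mathlib


open Matrix Filter

/-- Sign of the Minkowski metric on `ℝ^{n+2}_1`: the last coordinate is timelike. -/
noncomputable def minkSign (n : ℕ) (i : Fin (n + 2)) : ℝ := if (i : ℕ) = n + 1 then -1 else 1

/-- The Minkowski inner product `⟨·,·⟩` on `ℝ^{n+2}_1` (signature (n+1,1)). -/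
noncomputable def mink (n : ℕ) (x y : Fin (n + 2) → ℝ) : ℝ := ∑ i, minkSign n i * x i * y i

/-- The wedge endomorphism `(v ∧ w)(x) = ⟨v,x⟩w − ⟨w,x⟩v`, realized as a matrix acting by `mulVec`. -/
noncomputable def wedgeM (n : ℕ) (v w : Fin (n + 2) → ℝ) : Matrix (Fin (n + 2)) (Fin (n + 2)) ℝ :=
  Matrix.of fun i j => minkSign n j * (v j * w i - w j * v i)

lemma wedgeM_mulVec (n : ℕ) (v w x : Fin (n + 2) → ℝ) :
    (wedgeM n v w).mulVec x = mink n v x • w - mink n w x • v := by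
  funext i
  simp only [wedgeM, mulVec, dotProduct, of_apply, Pi.sub_apply, Pi.smul_apply, smul_eq_mul, mink]
  rw [Finset.sum_mul, Finset.sum_mul, ← Finset.sum_sub_distrib]
  exact Finset.sum_congr rfl fun j _ => by ring

lemma mink_comm (n : ℕ) (x y : Fin (n + 2) → ℝ) : mink n x y = mink n y x := by
  exact Finset.sum_congr rfl fun j _ => by ring

lemma mink_add_right (n : ℕ) (x y z : Fin (n + 2) → ℝ) :
    mink n x (y + z) = mink n x y + mink n x z := by
  simp only [mink, ← Finset.sum_add_distrib]
  exact Finset.sum_congr rfl fun j _ => by simp [Pi.add_apply]; ring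

lemma mink_sub_right (n : ℕ) (x y z : Fin (n + 2) → ℝ) :
    mink n x (y - z) = mink n x y - mink n x z := by
  simp only [mink, ← Finset.sum_sub_distrib]
  exact Finset.sum_congr rfl fun j _ => by simp [Pi.sub_apply]; ring

lemma mink_smul_right (n : ℕ) (c : ℝ) (x y : Fin (n + 2) → ℝ) :
    mink n x (c • y) = c * mink n x y := by
  simp only [mink, Finset.mul_sum]
  exact Finset.sum_congr rfl fun j _ => by simp [Pi.smul_apply]; ring

/-- with `o, ι` null, `⟨o,ι⟩ = −1`, and `t_u, t_v` orthonormal spacelike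
vectors orthogonal to `o, ι`, for `2λ − 1 > 0` the endomorphism
`ξ^Im = (t_u − λo − ι)∧t_v` has eigenvectors
`W_± = λo + ι − t_u ± √(2λ−1)·t_v` with eigenvalues `±√(2λ−1)`. -/
theorem xiIm_eigenvectors (n : ℕ) (o ι tu tv : Fin (n + 2) → ℝ) (lam : ℝ)
    (ho : mink n o o = 0) (hι : mink n ι ι = 0) (hoι : mink n o ι = -1)
    (htu : mink n tu tu = 1) (htv : mink n tv tv = 1) (htutv : mink n tu tv = 0)
    (hotu : mink n o tu = 0) (hotv : mink n o tv = 0)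
    (hιtu : mink n ι tu = 0) (hιtv : mink n ι tv = 0)
    (hlam : 0 < 2 * lam - 1) :
    ∀ Wp Wm : Fin (n + 2) → ℝ,
      Wp = lam • o + ι - tu + Real.sqrt (2 * lam - 1) • tv →
      Wm = lam • o + ι - tu - Real.sqrt (2 * lam - 1) • tv →
      (wedgeM n (tu - lam • o - ι) tv).mulVec Wp = Real.sqrt (2 * lam - 1) • Wp ∧
      (wedgeM n (tu - lam • o - ι) tv).mulVec Wm = (-Real.sqrt (2 * lam - 1)) • Wm := by
  intro Wp Wm hWp hWm
  set s := Real.sqrt (2 * lam - 1) with hs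
  have hs2 : s * s = 2 * lam - 1 := Real.mul_self_sqrt hlam.le
  have hιo : mink n ι o = -1 := (mink_comm n ι o).trans hoι
  have htuo : mink n tu o = 0 := (mink_comm n tu o).trans hotu
  have htuι : mink n tu ι = 0 := (mink_comm n tu ι).trans hιtu
  have htvtu : mink n tv tu = 0 := (mink_comm n tv tu).trans htutv
  have htvo : mink n tv o = 0 := (mink_comm n tv o).trans hotv
  have htvι : mink n tv ι = 0 := (mink_comm n tv ι).trans hιtv
  have key : ∀ x : Fin (n+2) → ℝ, mink n (tu - lam • o - ι) x
      = mink n tu x - lam * mink n o x - mink n ι x := by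
    intro x
    rw [mink_comm, mink_sub_right, mink_sub_right, mink_smul_right,
      mink_comm n x tu, mink_comm n x o, mink_comm n x ι]
  have hvWp : mink n (tu - lam • o - ι) Wp = s * s := by
    rw [key, hWp]
    simp only [mink_add_right, mink_sub_right, mink_smul_right,
      htu, htv, htutv, hotu, hotv, hιtu, hιtv, ho, hι, hoι, hιo, htuo, htuι, htuo]
    linarith [hs2]
  have hvWm : mink n (tu - lam • o - ι) Wm = s * s := by
    rw [key, hWm]
    simp only [mink_add_right, mink_sub_right, mink_smul_right,
      htu, htv, htutv, hotu, hotv, hιtu, hιtv, ho, hι, hoι, hιo, htuo, htuι]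
    linarith [hs2]
  have hwWp : mink n tv Wp = s := by
    rw [hWp]
    simp only [mink_add_right, mink_sub_right, mink_smul_right,
      htv, htvtu, htvo, htvι]
    ring
  have hwWm : mink n tv Wm = -s := by
    rw [hWm]
    simp only [mink_add_right, mink_sub_right, mink_smul_right,
      htv, htvtu, htvo, htvι]
    ring
  constructor
  · rw [wedgeM_mulVec, hvWp, hwWp, hWp]
    funext i
    simp only [Pi.sub_apply, Pi.add_apply, Pi.smul_apply, smul_eq_mul]
    nlinarith [hs2]
  · rw [wedgeM_mulVec, hvWm, hwWm, hWm]
    funext i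
    simp only [Pi.sub_apply, Pi.add_apply, Pi.smul_apply, smul_eq_mul]
    nlinarith [hs2]
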